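/- For a pure state the partial transposition criterion is necessary and sufficient: for a unit vector ψ in ℂ^{d_A} ⊗ ℂ^{d_B}, the partial transposition (ψψ*)^{T_B} of the rank-one projector ψψ* is positive semidefinite if and only if ψ is a product vector x ⊗ y. In particular, if ψ is not a product vector then (ψψ*)^{T_B} has a negative eigenvalue. -/

import Mathlib

open scoped BigOperators ComplexOrder

/-- The tensor product of two vectors, `(x ⊗ y)(a,b) = x a * y b`. -/
def tensorVec {dA dB : ℕ} (x : Fin dA → ℂ) (y : Fin dB → ℂ) :
    Fin dA × Fin dB → ℂ :=
  fun p => x p.1 * y p.2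

/-- The rank-one matrix `ψ ψ*`, with entries `(ψ ψ*)_{uv} = ψ u * conj (ψ v)`. -/
def vecProjector {ι : Type*} (ψ : ι → ℂ) : Matrix ι ι ℂ :=
  fun u v => ψ u * (starRingEnd ℂ) (ψ v)

/-- Partial transposition with respect to the second factor:
`(ρ^{T_B})_{(i,μ),(j,ν)} = ρ_{(i,ν),(j,μ)}`. -/
def partialTransposeB {dA dB : ℕ}
    (ρ : Matrix (Fin dA × Fin dB) (Fin dA × Fin dB) ℂ) :
    Matrix (Fin dA × Fin dB) (Fin dA × Fin dB) ℂ :=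
  fun p q => ρ (p.1, q.2) (q.1, p.2)

open Matrix in
lemma vecProjector_posSemidef {ι : Type*} [Fintype ι] (φ : ι → ℂ) :
    (vecProjector φ).PosSemidef := by
  refine Matrix.PosSemidef.of_dotProduct_mulVec_nonneg ?_ ?_
  · ext u v
    simp only [conjTranspose_apply, vecProjector, star_mul', Complex.star_def,
      Complex.conj_conj, mul_comm]
  · intro x
    have h : star x ⬝ᵥ (vecProjector φ *ᵥ x) =
        (∑ p, (starRingEnd ℂ) (x p) * φ p) *
          (starRingEnd ℂ) (∑ p, (starRingEnd ℂ) (x p) * φ p) := by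
      simp only [dotProduct, mulVec, vecProjector, Pi.star_apply, Complex.star_def,
        map_sum, _root_.map_mul, Complex.conj_conj]
      rw [Finset.sum_mul_sum]
      refine Finset.sum_congr rfl fun p _ => ?_
      rw [Finset.mul_sum]
      refine Finset.sum_congr rfl fun q _ => ?_
      ring
    rw [h, Complex.mul_conj]
    rw [Complex.zero_le_real]
    exact Complex.normSq_nonneg _

open Matrix in
/-- The key algebraic computation: the quadratic form of the partial transpose on
an explicit vector equals minus twice the square modulus of a 2×2 minor of `ψ`. -/
lemma key_neg {dA dB : ℕ} (ψ : Fin dA × Fin dB → ℂ) (i j : Fin dA) (μ ν : Fin dB) :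
    star (Pi.single (i,μ) (ψ (i,ν)) + Pi.single (i,ν) (-ψ (i,μ))
        + Pi.single (j,μ) (ψ (j,ν)) + Pi.single (j,ν) (-ψ (j,μ))) ⬝ᵥ
      (partialTransposeB (vecProjector ψ) *ᵥ
        (Pi.single (i,μ) (ψ (i,ν)) + Pi.single (i,ν) (-ψ (i,μ))
        + Pi.single (j,μ) (ψ (j,ν)) + Pi.single (j,ν) (-ψ (j,μ)))) =
      (-2 : ℂ) * ((ψ (i,μ) * ψ (j,ν) - ψ (i,ν) * ψ (j,μ)) *
        (starRingEnd ℂ) (ψ (i,μ) * ψ (j,ν) - ψ (i,ν) * ψ (j,μ))) := by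
  classical
  simp only [star_add, ← Pi.single_star, mulVec_add, mulVec_single, add_dotProduct,
    single_dotProduct, Pi.add_apply, Pi.smul_apply, op_smul_eq_mul, col_apply, partialTransposeB, vecProjector,
    Complex.star_def, _root_.map_mul, map_sub, map_neg, Complex.conj_conj]
  ring

lemma product_of_minors {dA dB : ℕ} (ψ : Fin dA × Fin dB → ℂ)
    (h : ∀ (i j : Fin dA) (μ ν : Fin dB), ψ (i,μ) * ψ (j,ν) = ψ (i,ν) * ψ (j,μ)) :
    ∃ (x : Fin dA → ℂ) (y : Fin dB → ℂ), ψ = tensorVec x y := by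
  by_cases h0 : ∀ p, ψ p = 0
  · exact ⟨0, 0, funext fun p => by simp [tensorVec, h0 p]⟩
  · push_neg at h0
    obtain ⟨⟨i0, μ0⟩, hp⟩ := h0
    refine ⟨fun a => ψ (a, μ0), fun b => ψ (i0, b) / ψ (i0, μ0), funext fun p => ?_⟩
    obtain ⟨a, b⟩ := p
    have hab := h a i0 μ0 b
    simp only [tensorVec]
    rw [mul_div_assoc', eq_div_iff hp]
    linear_combination -hab

/-- **For pure states the partial transposition criterion is necessary and sufficient.**
For a unit vector `ψ` in `ℂ^{d_A} ⊗ ℂ^{d_B}`, the partial transposition `(ψψ*)^{T_B}` of the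
rank-one projector `ψψ*` is positive semidefinite if and only if `ψ` is a product vector
`x ⊗ y`. In particular, if `ψ` is not a product vector then `(ψψ*)^{T_B}` has a negative
eigenvalue. -/
theorem pure_state_ppt_iff_product (dA dB : ℕ)
    (ψ : Fin dA × Fin dB → ℂ)
    (hψ : ∑ p : Fin dA × Fin dB, Complex.normSq (ψ p) = 1) :
    ((partialTransposeB (vecProjector ψ)).PosSemidef ↔
      ∃ (x : Fin dA → ℂ) (y : Fin dB → ℂ), ψ = tensorVec x y) ∧
    ((¬ ∃ (x : Fin dA → ℂ) (y : Fin dB → ℂ), ψ = tensorVec x y) →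
      ∃ (lam : ℝ) (v : Fin dA × Fin dB → ℂ), lam < 0 ∧ v ≠ 0 ∧
        (partialTransposeB (vecProjector ψ)).mulVec v = (lam : ℂ) • v) := by
  classical
  set M := partialTransposeB (vecProjector ψ) with hMdef
  have hHerm : M.IsHermitian := by
    ext p q
    simp only [Matrix.conjTranspose_apply, hMdef, partialTransposeB, vecProjector,
      star_mul', Complex.star_def, Complex.conj_conj]
    ring
  have forward : M.PosSemidef → ∃ (x : Fin dA → ℂ) (y : Fin dB → ℂ), ψ = tensorVec x y := by
    intro hpsd
    apply product_of_minors
    intro i j μ ν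
    by_contra hD
    have hge := hpsd.dotProduct_mulVec_nonneg (Pi.single (i,μ) (ψ (i,ν)) + Pi.single (i,ν) (-ψ (i,μ))
        + Pi.single (j,μ) (ψ (j,ν)) + Pi.single (j,ν) (-ψ (j,μ)))
    rw [hMdef, key_neg ψ i j μ ν, Complex.mul_conj] at hge
    have : ((-2 * Complex.normSq (ψ (i,μ) * ψ (j,ν) - ψ (i,ν) * ψ (j,μ)) : ℝ) : ℂ) =
        (-2 : ℂ) * (Complex.normSq (ψ (i,μ) * ψ (j,ν) - ψ (i,ν) * ψ (j,μ)) : ℂ) := by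
      push_cast; ring
    rw [← this, Complex.zero_le_real] at hge
    have hpos : 0 < Complex.normSq (ψ (i,μ) * ψ (j,ν) - ψ (i,ν) * ψ (j,μ)) := by
      apply Complex.normSq_pos.mpr
      intro hz
      exact hD (by linear_combination hz)
    nlinarith
  have backward : (∃ (x : Fin dA → ℂ) (y : Fin dB → ℂ), ψ = tensorVec x y) → M.PosSemidef := by
    rintro ⟨x, y, rfl⟩
    have heq : M = vecProjector (fun p : Fin dA × Fin dB => x p.1 * (starRingEnd ℂ) (y p.2)) := by
      ext p q
      simp only [hMdef, partialTransposeB, vecProjector, tensorVec, map_mul,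
        Complex.conj_conj]
      ring
    rw [heq]
    exact vecProjector_posSemidef _
  refine ⟨⟨forward, backward⟩, fun hnp => ?_⟩
  have hnpsd : ¬ M.PosSemidef := fun h => hnp (forward h)
  have hneg : ∃ k, hHerm.eigenvalues k < 0 := by
    by_contra hall
    push_neg at hall
    exact hnpsd (hHerm.posSemidef_iff_eigenvalues_nonneg.mpr hall)
  obtain ⟨k, hk⟩ := hneg
  refine ⟨hHerm.eigenvalues k, hHerm.eigenvectorBasis k, hk, ?_, ?_⟩
  · intro h
    exact hHerm.eigenvectorBasis.orthonormal.ne_zero k (by ext idx; exact congrFun h idx)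
  · funext p
    have h1 := congrFun (hHerm.mulVec_eigenvectorBasis k) p
    simpa [Complex.real_smul] using h1
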